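/- For all integers k ≥ 4, t with 1 ≤ t ≤ k−2, and n ≥ k, the k-th order Fibonacci numbers satisfy F^{(k)}_{n+k−1} = ∑_{j=1}^{k−(t+2)} j·F^{(k)}_{n+k−2−j} + (k−t)·∑_{s=0}^{t−1} F^{(k)}_{n+s} + ∑_{i=1}^{k−t} (k−i−t+1)·F^{(k)}_{n−i}, where the first sum is empty (equal to 0) when t = k−2. -/
import Mathlib


/-- The `k`-th order Fibonacci numbers: `F^(k)_0 = ⋯ = F^(k)_{k-2} = 0`,
`F^(k)_{k-1} = 1`, and `F^(k)_n = F^(k)_{n-1} + ⋯ + F^(k)_{n-k}` for `n ≥ k`. -/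
def genFib (k : ℕ) (n : ℕ) : ℕ :=
  if n < k then (if n = k - 1 then 1 else 0)
  else if h : n = 0 then 0
  else ∑ i ∈ Finset.range k, genFib k (n - 1 - i)
termination_by n
decreasing_by all_goals omega


lemma genFib_rec (k m : ℕ) (hk : 1 ≤ k) (hm : k ≤ m) :
    genFib k m = ∑ i ∈ Finset.Icc 1 k, genFib k (m - i) := by
  rw [genFib, if_neg (by omega), dif_neg (by omega), ← Finset.Ico_add_one_right_eq_Icc,
    Finset.sum_Ico_eq_sum_range, show k + 1 - 1 = k from rfl]
  exact Finset.sum_congr rfl fun i hi => by congr 1; omega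

lemma genFib_split (k n t : ℕ) (hk : 1 ≤ k) (hn : k ≤ n) (ht : t ≤ k) :
    genFib k (n + t) =
      (∑ s ∈ Finset.range t, genFib k (n + s)) +
      ∑ i ∈ Finset.Icc 1 (k - t), genFib k (n - i) := by
  rw [genFib_rec k (n + t) hk (by omega), ← Finset.Ico_add_one_right_eq_Icc,
    ← Finset.sum_Ico_consecutive _ (show 1 ≤ t + 1 by omega) (show t + 1 ≤ k + 1 by omega)]
  congr 1
  · rw [Finset.sum_Ico_eq_sum_range, show t + 1 - 1 = t from rfl, ← Finset.sum_range_reflect]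
    exact Finset.sum_congr rfl fun i hi => by
      simp only [Finset.mem_range] at hi; congr 1; omega
  · rw [Finset.sum_Ico_eq_sum_range, ← Finset.Ico_add_one_right_eq_Icc, Finset.sum_Ico_eq_sum_range,
      show k - t + 1 - 1 = k - t from rfl, show k + 1 - (t + 1) = k - t from by omega]
    exact Finset.sum_congr rfl fun i hi => by
      simp only [Finset.mem_range] at hi; congr 1; omega

lemma genFib_aux (k n : ℕ) (hk : 4 ≤ k) (hn : k ≤ n) :
    ∀ d t, 1 ≤ t → t + d = k - 2 →
    genFib k (n + k - 1) =
      (∑ j ∈ Finset.Icc 1 (k - (t + 2)), j * genFib k (n + k - 2 - j)) +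
      (k - t) * (∑ s ∈ Finset.range t, genFib k (n + s)) +
      ∑ i ∈ Finset.Icc 1 (k - t), (k - i - t + 1) * genFib k (n - i) := by
  intro d
  induction d with
  | zero =>
    intro t ht1 ht2
    rw [show k - (t + 2) = 0 by omega, show k - t = 2 by omega]
    have h2 : Finset.Icc 1 2 = {1, 2} := rfl
    rw [h2, Finset.sum_insert (by decide), Finset.sum_singleton,
      show k - 1 - t + 1 = 2 by omega, show k - 2 - t + 1 = 1 by omega]
    have hs := genFib_split k n t (by omega) hn (by omega)
    rw [show k - t = 2 by omega, h2, Finset.sum_insert (by decide),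
      Finset.sum_singleton] at hs
    rw [show n + k - 1 = n + (k - 1) by omega,
      genFib_split k n (k - 1) (by omega) hn (by omega),
      show k - (k - 1) = 1 by omega, Finset.Icc_self, Finset.sum_singleton,
      show k - 1 = t + 1 by omega, Finset.sum_range_succ, hs,
      show Finset.Icc 1 0 = ∅ from rfl, Finset.sum_empty]
    ring
  | succ d ih =>
    intro t ht1 ht2
    rw [ih (t + 1) (by omega) (by omega)]
    obtain ⟨c, hc⟩ : ∃ c, k - t = c + 3 := ⟨k - t - 3, by omega⟩
    have hF := genFib_split k n t (by omega) hn (by omega)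
    have h1 : (∑ j ∈ Finset.Icc 1 (k - (t + 2)), j * genFib k (n + k - 2 - j))
        = (∑ j ∈ Finset.Icc 1 (k - (t + 1 + 2)), j * genFib k (n + k - 2 - j))
          + (c + 1) * genFib k (n + t) := by
      rw [show k - (t + 2) = (k - (t + 1 + 2)) + 1 by omega,
        Finset.sum_Icc_succ_top (by omega)]
      congr 1
      · congr 1
        · omega
        · congr 1; omega
    have h3 : (∑ i ∈ Finset.Icc 1 (k - t), (k - i - t + 1) * genFib k (n - i))
        = (∑ i ∈ Finset.Icc 1 (k - (t + 1)), (k - i - (t + 1) + 1) * genFib k (n - i))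
          + ∑ i ∈ Finset.Icc 1 (k - t), genFib k (n - i) := by
      calc (∑ i ∈ Finset.Icc 1 (k - t), (k - i - t + 1) * genFib k (n - i))
          = ∑ i ∈ Finset.Icc 1 (k - t),
              ((k - i - t) * genFib k (n - i) + genFib k (n - i)) :=
            Finset.sum_congr rfl fun i hi => by ring
        _ = (∑ i ∈ Finset.Icc 1 (k - t), (k - i - t) * genFib k (n - i))
              + ∑ i ∈ Finset.Icc 1 (k - t), genFib k (n - i) := Finset.sum_add_distrib
        _ = (∑ i ∈ Finset.Icc 1 (k - (t + 1)), (k - i - (t + 1) + 1) * genFib k (n - i))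
              + ∑ i ∈ Finset.Icc 1 (k - t), genFib k (n - i) := by
            congr 1
            rw [show k - t = (k - (t + 1)) + 1 by omega,
              Finset.sum_Icc_succ_top (by omega),
              show k - (k - (t + 1) + 1) - t = 0 by omega, zero_mul, add_zero]
            exact Finset.sum_congr rfl fun i hi => by
              simp only [Finset.mem_Icc] at hi; congr 1; omega
    rw [h1, h3, Finset.sum_range_succ, hF, show k - (t + 1) = c + 2 by omega, hc]
    ring

/-- Lemma 3.3(i): for `k ≥ 4`, `1 ≤ t ≤ k-2` and `n ≥ k`,
`F^(k)_{n+k-1} = ∑_{j=1}^{k-(t+2)} j·F^(k)_{n+k-2-j}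
  + (k-t)·∑_{s=0}^{t-1} F^(k)_{n+s} + ∑_{i=1}^{k-t} (k-i-t+1)·F^(k)_{n-i}`,
the first sum being empty when `t = k-2`. -/
theorem genFib_linear_identity (k t n : ℕ) (hk : 4 ≤ k) (ht1 : 1 ≤ t)
    (ht2 : t ≤ k - 2) (hn : k ≤ n) :
    genFib k (n + k - 1) =
      (∑ j ∈ Finset.Icc 1 (k - (t + 2)), j * genFib k (n + k - 2 - j)) +
      (k - t) * (∑ s ∈ Finset.range t, genFib k (n + s)) +
      ∑ i ∈ Finset.Icc 1 (k - t), (k - i - t + 1) * genFib k (n - i) :=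
  genFib_aux k n hk hn (k - 2 - t) t ht1 (by omega)
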